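/- The variance of Z ~ BASLG₂(α) equals π²(8400 + 17920π²α² + 10280π⁴α⁴ + 3456π⁶α⁶ + 1085π⁸α⁸)/(7·(60 + 40π²α² + 7π⁴α⁴)²). -/

import Mathlib

open Real MeasureTheory

section Aux
open Set Filter

/-- The standard logistic density. -/
noncomputable def g (z : ℝ) : ℝ := Real.exp (-z) / (1 + Real.exp (-z)) ^ 2

lemma g_even (z : ℝ) : g (-z) = g z := by
  unfold g
  rw [neg_neg]
  have h : Real.exp z = (Real.exp (-z))⁻¹ := by rw [Real.exp_neg, inv_inv]
  have hz : Real.exp (-z) ≠ 0 := (Real.exp_pos _).ne'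
  rw [h]; field_simp; ring

lemma g_pos (z : ℝ) : 0 < g z := by unfold g; positivity

lemma g_div_le (x : ℝ) (hx : 0 < x) : x / (1 + x) ^ 2 ≤ x := by
  rw [div_le_iff₀ (by positivity)]
  nlinarith [mul_nonneg (sq_nonneg x) hx.le, sq_nonneg x]

lemma g_le (z : ℝ) : g z ≤ Real.exp (-|z|) := by
  rcases le_total 0 z with h | h
  · rw [abs_of_nonneg h]; exact g_div_le _ (Real.exp_pos _)
  · rw [abs_of_nonpos h, neg_neg, ← g_even]
    unfold g; rw [neg_neg]
    exact g_div_le _ (Real.exp_pos _)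

lemma g_cont : Continuous g := by
  unfold g
  exact (Real.continuous_exp.comp continuous_neg).div
    (((continuous_const.add (Real.continuous_exp.comp continuous_neg)).pow 2))
    (fun z => by positivity)

lemma bernoulli_six : bernoulli 6 = 1/42 := by
  rw [bernoulli_eq_bernoulli'_of_ne_one (by decide)]
  rw [show (6:ℕ) = 5+1 from rfl, bernoulli'_def]
  simp [Finset.sum_range_succ, bernoulli'_two, bernoulli'_four, bernoulli'_one, bernoulli'_zero,
    bernoulli'_eq_zero_of_odd (by decide : Odd 3) (by norm_num),
    bernoulli'_eq_zero_of_odd (by decide : Odd 5) (by norm_num)]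
  norm_num [Nat.choose]

lemma hasSum_zeta_six : HasSum (fun n : ℕ => (1 : ℝ) / (n : ℝ) ^ 6) (π ^ 6 / 945) := by
  convert hasSum_zeta_nat three_ne_zero using 1
  rw [bernoulli_six]
  norm_num [Nat.factorial]
  ring

lemma intOn_Ioi_pow_exp (k : ℕ) {c : ℝ} (hc : 0 < c) :
    IntegrableOn (fun z : ℝ => z ^ k * Real.exp (-(c * z))) (Ioi 0) := by
  have h := integrableOn_rpow_mul_exp_neg_mul_rpow (p := 1) (s := (k : ℝ)) (b := c)
    (by exact lt_of_lt_of_le (by norm_num) (Nat.cast_nonneg k)) one_pos hc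
  refine h.congr_fun (fun x hx => ?_) measurableSet_Ioi
  beta_reduce
  rw [Real.rpow_natCast, Real.rpow_one, neg_mul]

lemma intA (k : ℕ) {c : ℝ} (hc : 0 < c) :
    ∫ z in Ioi 0, z ^ k * Real.exp (-(c * z)) = (Nat.factorial k : ℝ) / c ^ (k + 1) := by
  have h := integral_rpow_mul_exp_neg_mul_Ioi (a := (k : ℝ) + 1) (r := c)
    (by positivity) hc
  rw [show ((k : ℝ) + 1 - 1) = (k : ℝ) by ring] at h
  have e : ∫ z in Ioi 0, z ^ k * Real.exp (-(c * z))
      = ∫ t in Ioi (0:ℝ), t ^ (k : ℝ) * Real.exp (-(c * t)) := by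
    refine setIntegral_congr_fun measurableSet_Ioi (fun x hx => ?_)
    rw [Real.rpow_natCast]
  rw [e, h, Real.Gamma_nat_eq_factorial,
    show ((k:ℝ)+1) = ((k+1 : ℕ) : ℝ) by push_cast; ring,
    Real.rpow_natCast, div_pow, one_pow]
  ring

lemma integrable_abs_pow_exp (k : ℕ) :
    Integrable (fun z : ℝ => |z| ^ k * Real.exp (-|z|)) := by
  have h1 : IntegrableOn (fun z : ℝ => |z| ^ k * Real.exp (-|z|)) (Ioi 0) := by
    refine ((intOn_Ioi_pow_exp k one_pos).congr_fun (fun x hx => ?_) measurableSet_Ioi)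
    rw [abs_of_pos hx]; simp only [one_mul]
  have h2 : IntegrableOn (fun z : ℝ => |z| ^ k * Real.exp (-|z|)) (Iic 0) := by
    rw [← Measure.map_neg_eq_self (volume : Measure ℝ)]
    have m : MeasurableEmbedding fun x : ℝ => -x := (Homeomorph.neg ℝ).measurableEmbedding
    rw [m.integrableOn_map_iff]
    simp_rw [Function.comp_def, abs_neg, neg_preimage, neg_Iic, neg_zero]
    exact (integrableOn_Ici_iff_integrableOn_Ioi).mpr h1
  have := h2.union h1
  rwa [Iic_union_Ioi, integrableOn_univ] at this

lemma integrable_pow_g (k : ℕ) : Integrable (fun z : ℝ => z ^ k * g z) := by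
  refine (integrable_abs_pow_exp k).mono ?_ ?_
  · exact ((continuous_pow k).mul g_cont).aestronglyMeasurable
  · refine Eventually.of_forall (fun z => ?_)
    rw [Real.norm_eq_abs, Real.norm_eq_abs, abs_mul, abs_pow,
      abs_of_pos (g_pos z), abs_of_nonneg (by positivity : (0:ℝ) ≤ |z| ^ k * Real.exp (-|z|))]
    exact mul_le_mul_of_nonneg_left (g_le z) (by positivity)

lemma hasSum_eta {k : ℕ} (hk : 1 ≤ k) {S : ℝ}
    (h : HasSum (fun n : ℕ => 1 / (n : ℝ) ^ k) S) :
    HasSum (fun n : ℕ => (-1 : ℝ) ^ (n + 1) / (n : ℝ) ^ k) ((1 - 2 / 2 ^ k) * S) := by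
  set fe : ℕ → ℝ := fun m => if Even m then 1 / (m : ℝ) ^ k else 0 with hfe
  have hcomp : (fun n : ℕ => fe (2 * n)) = fun n : ℕ => (1 / 2 ^ k) * (1 / (n : ℝ) ^ k) := by
    funext n
    simp only [hfe, if_pos (even_two_mul n)]
    rcases Nat.eq_zero_or_pos n with rfl | hn
    · simp [zero_pow (by omega : k ≠ 0)]
    · push_cast
      rw [mul_pow]
      field_simp
  have he : HasSum fe ((1 / 2 ^ k) * S) := by
    have hinj : Function.Injective (fun n : ℕ => 2 * n) := fun a b hab => by simpa using hab
    have h0 : ∀ m ∉ Set.range (fun n : ℕ => 2 * n), fe m = 0 := by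
      intro m hm
      have : ¬ Even m := by
        intro ⟨r, hr⟩
        exact hm ⟨r, by simp; omega⟩
      simp [hfe, this]
    rw [← Function.Injective.hasSum_iff hinj h0]
    rw [show (fe ∘ fun n : ℕ => 2 * n) = fun n : ℕ => fe (2 * n) from rfl, hcomp]
    exact h.mul_left _
  have := h.sub (he.mul_left 2)
  have heq : (fun n : ℕ => 1 / (n : ℝ) ^ k - 2 * fe n)
      = fun n : ℕ => (-1 : ℝ) ^ (n + 1) / (n : ℝ) ^ k := by
    funext n
    by_cases hn : Even n
    · have hodd : Odd (n + 1) := Even.add_one hn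
      rw [hfe]
      simp only [if_pos hn, hodd.neg_one_pow]
      ring
    · have heven : Even (n + 1) := Odd.add_one (Nat.not_even_iff_odd.mp hn)
      rw [hfe]
      simp only [if_neg hn, heven.neg_one_pow]
      ring
  rw [heq] at this
  rw [show (1 - 2 / 2 ^ k) * S = S - 2 * (1 / 2 ^ k * S) by ring]
  exact this

lemma moment_Ioi (k : ℕ) (hk : 2 ≤ k) {E : ℝ}
    (hE : HasSum (fun n : ℕ => (-1 : ℝ) ^ (n + 1) / (n : ℝ) ^ k) E) :
    ∫ z in Ioi 0, z ^ k * g z = (Nat.factorial k : ℝ) * E := by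
  set F : ℕ → ℝ → ℝ :=
    fun n z => ((-1 : ℝ) ^ (n + 1) * n) * (z ^ k * Real.exp (-((n : ℝ) * z))) with hF
  have hF0 : F 0 = fun _ => 0 := by funext z; simp [hF]
  have hpt : ∀ z ∈ Ioi (0:ℝ), HasSum (fun n => F n z) (z ^ k * g z) := by
    intro z hz
    have hz' : (0:ℝ) < z := hz
    set x := Real.exp (-z) with hx
    have hx1 : x < 1 := by
      rw [hx, Real.exp_lt_one_iff]; linarith
    have hx0 : 0 < x := Real.exp_pos _
    have hnorm : ‖-x‖ < 1 := by rw [norm_neg, Real.norm_eq_abs, abs_of_pos hx0]; exact hx1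
    have h := (hasSum_coe_mul_geometric_of_norm_lt_one hnorm).mul_left (-(z ^ k))
    have he : ∀ n : ℕ, -(z ^ k) * ((n : ℝ) * (-x) ^ n) = F n z := by
      intro n
      show -(z ^ k) * ((n : ℝ) * (-x) ^ n)
          = ((-1 : ℝ) ^ (n + 1) * n) * (z ^ k * Real.exp (-((n : ℝ) * z)))
      have hxe : Real.exp (-((n : ℝ) * z)) = x ^ n := by
        rw [hx, ← Real.exp_nat_mul]; ring_nf
      rw [hxe, neg_pow]
      ring
    have hv : -(z ^ k) * (-x / (1 - -x) ^ 2) = z ^ k * g z := by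
      unfold g
      rw [← hx]
      field_simp
      rw [sub_neg_eq_add, div_self (pow_ne_zero _ (by linarith))]
    rw [funext he, hv] at h
    exact h
  have hcongr : ∫ z in Ioi 0, z ^ k * g z = ∫ z in Ioi 0, ∑' n, F n z := by
    refine setIntegral_congr_fun measurableSet_Ioi (fun z hz => ?_)
    exact ((hpt z hz).tsum_eq).symm
  have hInt : ∀ n : ℕ, IntegrableOn (fun z => F n z) (Ioi 0) := by
    intro n
    rcases Nat.eq_zero_or_pos n with rfl | hn
    · rw [hF0]; exact integrable_zero _ _ _
    · exact ((intOn_Ioi_pow_exp k (by exact_mod_cast hn)).const_mul _)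
  have hval : ∀ n : ℕ, ∫ z in Ioi 0, F n z
      = ((-1 : ℝ) ^ (n + 1) * n) * ((Nat.factorial k : ℝ) / (n : ℝ) ^ (k + 1)) := by
    intro n
    rcases Nat.eq_zero_or_pos n with rfl | hn
    · rw [hF0]; simp
    · rw [hF, integral_const_mul, intA k (by exact_mod_cast hn : (0:ℝ) < (n:ℝ))]
  have hnormval : ∀ n : ℕ, ∫ z in Ioi 0, ‖F n z‖
      = (n : ℝ) * ((Nat.factorial k : ℝ) / (n : ℝ) ^ (k + 1)) := by
    intro n
    rcases Nat.eq_zero_or_pos n with rfl | hn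
    · rw [hF0]; simp
    · have : ∀ z ∈ Ioi (0:ℝ), ‖F n z‖ = (n:ℝ) * (z ^ k * Real.exp (-((n : ℝ) * z))) := by
        intro z hz
        have hz' : (0:ℝ) < z := hz
        rw [hF, Real.norm_eq_abs, abs_mul, abs_mul, abs_pow, abs_neg, abs_one, one_pow,
          one_mul, Nat.abs_cast,
          abs_of_nonneg (by positivity : (0:ℝ) ≤ z ^ k * Real.exp (-((n:ℝ) * z)))]
      rw [setIntegral_congr_fun measurableSet_Ioi this, integral_const_mul,
        intA k (by exact_mod_cast hn : (0:ℝ) < (n:ℝ))]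
  set a : ℕ → ℝ := fun n => (n : ℝ) * ((Nat.factorial k : ℝ) / (n : ℝ) ^ (k + 1)) with ha
  have ha_nonneg : ∀ n, 0 ≤ a n := fun n => by positivity
  have hsummable : Summable a := by
    have hbase : Summable (fun n : ℕ => (Nat.factorial k : ℝ) * (1 / (n : ℝ) ^ 2)) :=
      (Real.summable_one_div_nat_pow.mpr (by norm_num)).mul_left _
    refine Summable.of_nonneg_of_le ha_nonneg (fun n => ?_) hbase
    rcases Nat.eq_zero_or_pos n with rfl | hn
    · simp [ha]
    · have hn' : (1:ℝ) ≤ (n:ℝ) := by exact_mod_cast hn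
      show (n:ℝ) * ((Nat.factorial k : ℝ) / (n:ℝ) ^ (k+1)) ≤ (Nat.factorial k : ℝ) * (1 / (n:ℝ)^2)
      have h1 : (n : ℝ) ^ 2 ≤ (n : ℝ) ^ k := pow_le_pow_right₀ hn' hk
      have h2 : (n : ℝ) * ((Nat.factorial k : ℝ) / (n : ℝ) ^ (k+1))
          = (Nat.factorial k : ℝ) / (n : ℝ) ^ k := by
        rw [pow_succ]
        field_simp
      rw [h2, div_le_iff₀ (by positivity)]
      calc (Nat.factorial k : ℝ) = (Nat.factorial k : ℝ) * (1 / (n:ℝ)^2) * (n:ℝ)^2 := by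
            field_simp
        _ ≤ (Nat.factorial k : ℝ) * (1 / (n:ℝ)^2) * (n:ℝ)^k := by
            refine mul_le_mul_of_nonneg_left h1 (by positivity)
  have hmeas : ∀ n : ℕ, AEStronglyMeasurable (fun z => F n z)
      ((volume : Measure ℝ).restrict (Ioi 0)) := by
    intro n
    exact (Continuous.aestronglyMeasurable (by
      exact continuous_const.mul ((continuous_pow k).mul
        (Real.continuous_exp.comp (continuous_const.mul continuous_id).neg))))
  have hlint : ∑' n, ∫⁻ z in Ioi (0:ℝ), ‖F n z‖₊ ≠ ⊤ := by
    have heach : ∀ n, ∫⁻ z in Ioi (0:ℝ), ‖F n z‖₊ = ENNReal.ofReal (a n) := by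
      intro n
      simp_rw [← enorm_eq_nnnorm]
      rw [← ofReal_integral_norm_eq_lintegral_enorm (hInt n), hnormval n]
    rw [funext heach, ← ENNReal.ofReal_tsum_of_nonneg ha_nonneg hsummable]
    exact ENNReal.ofReal_ne_top
  rw [hcongr, integral_tsum hmeas hlint, funext hval]
  have hfun : (fun n : ℕ => ((-1 : ℝ) ^ (n + 1) * n) * ((Nat.factorial k : ℝ) / (n : ℝ) ^ (k + 1)))
      = fun n : ℕ => (Nat.factorial k : ℝ) * ((-1 : ℝ) ^ (n + 1) / (n : ℝ) ^ k) := by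
    funext n
    rcases Nat.eq_zero_or_pos n with rfl | hn
    · simp [zero_pow (by omega : k ≠ 0)]
    · have hn0 : (n:ℝ) ≠ 0 := by exact_mod_cast hn.ne'
      rw [pow_succ]
      field_simp
      ring
  rw [hfun]
  exact (hE.mul_left _).tsum_eq

lemma integral_g_Ioi : ∫ z in Ioi (0:ℝ), g z = 1 / 2 := by
  have hderiv : ∀ x ∈ Ici (0:ℝ), HasDerivAt (fun z : ℝ => (1 + Real.exp (-z))⁻¹) (g x) x := by
    intro x _
    have h1 : HasDerivAt (fun z : ℝ => 1 + Real.exp (-z)) (-Real.exp (-x)) x := by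
      have := (Real.hasDerivAt_exp (-x)).comp x (hasDerivAt_neg x)
      simpa using this.const_add 1
    have h2 : HasDerivAt (fun z : ℝ => (1 + Real.exp (-z))⁻¹) _ x := h1.inv (by positivity)
    convert h2 using 1
    unfold g
    field_simp
  have hint : IntegrableOn g (Ioi 0) := by
    have := (integrable_pow_g 0).integrableOn (s := Ioi 0)
    simpa using this
  have htend : Tendsto (fun z : ℝ => (1 + Real.exp (-z))⁻¹) atTop (nhds 1) := by
    have h1 : Tendsto (fun z : ℝ => Real.exp (-z)) atTop (nhds 0) :=
      Real.tendsto_exp_atBot.comp tendsto_neg_atTop_atBot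
    have h2 : Tendsto (fun z : ℝ => 1 + Real.exp (-z)) atTop (nhds 1) := by
      simpa using h1.const_add 1
    simpa using h2.inv₀ (by norm_num)
  have := integral_Ioi_of_hasDerivAt_of_tendsto' hderiv hint htend
  rw [this]
  norm_num

lemma integral_pow_g_even (k : ℕ) (hk : Even k) :
    ∫ z, z ^ k * g z = 2 * ∫ z in Ioi (0:ℝ), z ^ k * g z := by
  rw [← integral_comp_abs (f := fun x => x ^ k * g x)]
  refine integral_congr_ae (Eventually.of_forall (fun x => ?_))
  show x ^ k * g x = |x| ^ k * g |x|
  rw [hk.pow_abs]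
  rcases le_total 0 x with h | h
  · rw [abs_of_nonneg h]
  · rw [abs_of_nonpos h, g_even]

lemma integral_pow_g_odd (k : ℕ) (hk : Odd k) :
    ∫ z, z ^ k * g z = 0 := by
  have h := integral_neg_eq_self (fun z : ℝ => z ^ k * g z) (volume : Measure ℝ)
  have h2 : (fun z : ℝ => (-z) ^ k * g (-z)) = fun z : ℝ => -(z ^ k * g z) := by
    funext z
    rw [hk.neg_pow, g_even]
    ring
  rw [h2] at h
  rw [integral_neg] at h
  linarith

lemma moment0 : ∫ z : ℝ, z ^ 0 * g z = 1 := by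
  rw [integral_pow_g_even 0 (by decide)]
  have : ∫ z in Ioi (0:ℝ), z ^ 0 * g z = ∫ z in Ioi (0:ℝ), g z := by
    refine setIntegral_congr_fun measurableSet_Ioi (fun x hx => ?_)
    rw [pow_zero, one_mul]
  rw [this, integral_g_Ioi]
  norm_num

lemma moment2 : ∫ z : ℝ, z ^ 2 * g z = π ^ 2 / 3 := by
  rw [integral_pow_g_even 2 (by decide),
    moment_Ioi 2 le_rfl (hasSum_eta one_le_two hasSum_zeta_two)]
  norm_num [Nat.factorial]
  ring

lemma moment4 : ∫ z : ℝ, z ^ 4 * g z = 7 * π ^ 4 / 15 := by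
  rw [integral_pow_g_even 4 (by decide),
    moment_Ioi 4 (by norm_num) (hasSum_eta (by norm_num) hasSum_zeta_four)]
  norm_num [Nat.factorial]
  ring

lemma moment6 : ∫ z : ℝ, z ^ 6 * g z = 31 * π ^ 6 / 21 := by
  rw [integral_pow_g_even 6 (by decide),
    moment_Ioi 6 (by norm_num) (hasSum_eta (by norm_num) hasSum_zeta_six)]
  norm_num [Nat.factorial]
  ring

lemma moment1 : ∫ z : ℝ, z ^ 1 * g z = 0 := integral_pow_g_odd 1 odd_one
lemma moment3 : ∫ z : ℝ, z ^ 3 * g z = 0 := integral_pow_g_odd 3 (by decide)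
lemma moment5 : ∫ z : ℝ, z ^ 5 * g z = 0 := integral_pow_g_odd 5 (by decide)

end Aux

noncomputable def C₂ (α : ℝ) : ℝ := (60 + 40 * π ^ 2 * α ^ 2 + 7 * π ^ 4 * α ^ 4) / 15

noncomputable def f (z α : ℝ) : ℝ :=
  ((1 - α * z) ^ 2 + 1) ^ 2 * Real.exp (-z) / (C₂ α * (1 + Real.exp (-z)) ^ 2)

lemma C₂_pos (α : ℝ) : 0 < C₂ α := by
  unfold C₂
  have := Real.pi_pos
  positivity

lemma integral_comb (j : ℕ) (c0 c1 c2 c3 c4 : ℝ) :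
    ∫ z : ℝ, (c0 * (z ^ j * g z) + c1 * (z ^ (j+1) * g z) + c2 * (z ^ (j+2) * g z)
        + c3 * (z ^ (j+3) * g z) + c4 * (z ^ (j+4) * g z))
      = c0 * (∫ z : ℝ, z ^ j * g z) + c1 * (∫ z : ℝ, z ^ (j+1) * g z)
        + c2 * (∫ z : ℝ, z ^ (j+2) * g z) + c3 * (∫ z : ℝ, z ^ (j+3) * g z)
        + c4 * (∫ z : ℝ, z ^ (j+4) * g z) := by
  have i0 := (integrable_pow_g j).const_mul c0
  have i1 := (integrable_pow_g (j+1)).const_mul c1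
  have i2 := (integrable_pow_g (j+2)).const_mul c2
  have i3 := (integrable_pow_g (j+3)).const_mul c3
  have i4 := (integrable_pow_g (j+4)).const_mul c4
  have i01 : Integrable (fun z : ℝ => c0 * (z ^ j * g z) + c1 * (z ^ (j+1) * g z)) :=
    i0.add i1
  have i012 : Integrable (fun z : ℝ => c0 * (z ^ j * g z) + c1 * (z ^ (j+1) * g z)
      + c2 * (z ^ (j+2) * g z)) := i01.add i2
  have i0123 : Integrable (fun z : ℝ => c0 * (z ^ j * g z) + c1 * (z ^ (j+1) * g z)
      + c2 * (z ^ (j+2) * g z) + c3 * (z ^ (j+3) * g z)) := i012.add i3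
  rw [integral_add i0123 i4, integral_add i012 i3, integral_add i01 i2, integral_add i0 i1,
    integral_const_mul, integral_const_mul, integral_const_mul, integral_const_mul,
    integral_const_mul]

lemma integral_pow_f (α : ℝ) (j : ℕ) :
    ∫ z : ℝ, z ^ j * f z α
      = (4 / C₂ α) * (∫ z : ℝ, z ^ j * g z) + (-8 * α / C₂ α) * (∫ z : ℝ, z ^ (j+1) * g z)
        + (8 * α ^ 2 / C₂ α) * (∫ z : ℝ, z ^ (j+2) * g z)
        + (-4 * α ^ 3 / C₂ α) * (∫ z : ℝ, z ^ (j+3) * g z)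
        + (α ^ 4 / C₂ α) * (∫ z : ℝ, z ^ (j+4) * g z) := by
  rw [← integral_comb]
  refine integral_congr_ae (Filter.Eventually.of_forall (fun z => ?_))
  unfold f g
  have hC : C₂ α ≠ 0 := (C₂_pos α).ne'
  have hD : (1 + Real.exp (-z)) ≠ 0 := by positivity
  field_simp
  ring

theorem BASLG2_variance (α : ℝ) :
    (∫ z : ℝ, z ^ 2 * f z α) - (∫ z : ℝ, z * f z α) ^ 2
      = π ^ 2 * (8400 + 17920 * π ^ 2 * α ^ 2 + 10280 * π ^ 4 * α ^ 4
          + 3456 * π ^ 6 * α ^ 6 + 1085 * π ^ 8 * α ^ 8)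
        / (7 * (60 + 40 * π ^ 2 * α ^ 2 + 7 * π ^ 4 * α ^ 4) ^ 2) := by
  have h1 : ∫ z : ℝ, z * f z α = ∫ z : ℝ, z ^ 1 * f z α := by
    refine integral_congr_ae (Filter.Eventually.of_forall (fun z => ?_))
    show z * f z α = z ^ 1 * f z α
    rw [pow_one]
  have m1 : ∫ z : ℝ, z * g z = 0 := by simpa using moment1
  rw [h1, integral_pow_f α 1, integral_pow_f α 2]
  norm_num
  rw [m1, moment2, moment3, moment4, moment5, moment6]
  have hC : C₂ α ≠ 0 := (C₂_pos α).ne'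
  have hpi : π ≠ 0 := Real.pi_ne_zero
  have hden : (60 + 40 * π ^ 2 * α ^ 2 + 7 * π ^ 4 * α ^ 4) ≠ 0 := by
    have := Real.pi_pos
    positivity
  unfold C₂ at *
  field_simp
  ring
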